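/- The 3×3 real matrix V = [[μ+σ, 0, 0], [−(1−p)σ, μ+d_A+ε_A+γ_A, 0], [−σp, 0, μ+d_I+ε_I+γ_I]] is invertible, and the spectral radius of the next-generation matrix F·V⁻¹, where F = [[0, θβ₁S°, β₁S°], [0, 0, 0], [0, 0, 0]], equals (θ(1−p)/(μ+d_A+ε_A+γ_A) + p/(μ+d_I+ε_I+γ_I))·σβ₁S°/(μ+σ). -/

import Mathlib

open scoped BigOperators

lemma spec_aux (c0 x y : ℂ) :
    spectrum ℂ (!![c0, x, y; 0,0,0; 0,0,0] : Matrix (Fin 3) (Fin 3) ℂ) = {c0, 0} := by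
  ext k
  rw [spectrum.mem_iff, Matrix.isUnit_iff_isUnit_det, isUnit_iff_ne_zero, not_not]
  have : ((algebraMap ℂ (Matrix (Fin 3) (Fin 3) ℂ)) k - !![c0, x, y; 0,0,0; 0,0,0]).det
      = (k - c0) * k * k := by
    simp [Matrix.det_fin_three, Matrix.algebraMap_matrix_apply, Matrix.vecHead, Matrix.vecTail]
  rw [this]
  constructor
  · intro h
    rcases mul_eq_zero.mp h with h | h
    · rcases mul_eq_zero.mp h with h | h
      · exact Or.inl (by simpa [sub_eq_zero] using h)
      · exact Or.inr h
    · exact Or.inr h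
  · rintro (rfl | rfl) <;> simp

lemma sr_aux (c0 x y : ℝ) (hc0 : 0 ≤ c0) :
    spectralRadius ℂ
      ((!![c0, x, y; 0,0,0; 0,0,0] : Matrix (Fin 3) (Fin 3) ℝ).map (fun r : ℝ => (r : ℂ)))
      = ENNReal.ofReal c0 := by
  have hmap : (!![c0, x, y; 0,0,0; 0,0,0] : Matrix (Fin 3) (Fin 3) ℝ).map (fun r : ℝ => (r : ℂ))
      = (!![(c0:ℂ), x, y; 0,0,0; 0,0,0] : Matrix (Fin 3) (Fin 3) ℂ) := by
    ext i j; fin_cases i <;> fin_cases j <;> simp [Matrix.vecHead, Matrix.vecTail]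
  rw [hmap, spectralRadius, spec_aux]
  rw [show ({(c0:ℂ), 0} : Set ℂ) = insert (c0:ℂ) {0} from rfl]
  rw [iSup_insert, iSup_singleton]
  simp only [nnnorm_zero, ENNReal.coe_zero]
  rw [sup_eq_left.mpr zero_le]
  rw [Complex.nnnorm_real]; exact Real.enorm_eq_ofReal hc0

/-- the transition matrix `V` is invertible and the spectral radius of the
next-generation matrix `F·V⁻¹` equals
`(θ(1−p)/(μ+d_A+ε_A+γ_A) + p/(μ+d_I+ε_I+γ_I))·σβ₁S°/(μ+σ)`. -/
theorem covid_next_generation_spectral_radius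
    (Λ q lam μ σ εA γA dA εI γI dI θ p β₁ : ℝ)
    (hΛ : 0 < Λ) (hq : 0 < q) (hlam : 0 < lam) (hμ : 0 < μ) (hσ : 0 < σ)
    (hεA : 0 < εA) (hγA : 0 < γA) (hdA : 0 < dA)
    (hεI : 0 < εI) (hγI : 0 < γI) (hdI : 0 < dI)
    (hθ : θ ∈ Set.Ioo (0 : ℝ) 1) (hp : p ∈ Set.Ioo (0 : ℝ) 1) (hβ₁ : 0 < β₁) :
    IsUnit (!![μ + σ, 0, 0;
               -((1 - p) * σ), μ + dA + εA + γA, 0;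
               -(σ * p), 0, μ + dI + εI + γI] : Matrix (Fin 3) (Fin 3) ℝ) ∧
    spectralRadius ℂ
      (((!![0, θ * β₁ * (Λ / μ * ((μ + lam) / (μ + q + lam))),
              β₁ * (Λ / μ * ((μ + lam) / (μ + q + lam)));
            0, 0, 0;
            0, 0, 0] : Matrix (Fin 3) (Fin 3) ℝ) *
        (!![μ + σ, 0, 0;
            -((1 - p) * σ), μ + dA + εA + γA, 0;
            -(σ * p), 0, μ + dI + εI + γI] : Matrix (Fin 3) (Fin 3) ℝ)⁻¹).map
        (fun r : ℝ => (r : ℂ))) =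
      ENNReal.ofReal
        ((θ * (1 - p) / (μ + dA + εA + γA) + p / (μ + dI + εI + γI)) *
          (σ * β₁ * (Λ / μ * ((μ + lam) / (μ + q + lam))) / (μ + σ))) := by
  set S : ℝ := Λ / μ * ((μ + lam) / (μ + q + lam)) with hS
  set a : ℝ := μ + σ with ha
  set b : ℝ := μ + dA + εA + γA with hb
  set c : ℝ := μ + dI + εI + γI with hc
  have ha0 : 0 < a := by positivity
  have hb0 : 0 < b := by positivity
  have hc0 : 0 < c := by positivity
  have hS0 : 0 < S := by
    have : 0 < μ + q + lam := by positivity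
    have h1 : 0 < Λ / μ := by positivity
    have h2 : 0 < (μ + lam) / (μ + q + lam) := by positivity
    exact mul_pos h1 h2
  set V : Matrix (Fin 3) (Fin 3) ℝ :=
    !![a, 0, 0; -((1 - p) * σ), b, 0; -(σ * p), 0, c] with hV
  set W : Matrix (Fin 3) (Fin 3) ℝ :=
    !![1/a, 0, 0; (1 - p) * σ / (a * b), 1/b, 0; σ * p / (a * c), 0, 1/c] with hW
  have hVW : V * W = 1 := by
    ext i j
    fin_cases i <;> fin_cases j <;>
      · simp [hV, hW, Matrix.mul_apply, Fin.sum_univ_three, Matrix.vecHead, Matrix.vecTail,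
          Matrix.one_apply]
        try field_simp
        try ring
  have hVunit : IsUnit V := by
    rw [Matrix.isUnit_iff_isUnit_det, isUnit_iff_ne_zero]
    have : V.det = a * b * c := by
      simp [hV, Matrix.det_fin_three, Matrix.vecHead, Matrix.vecTail]
    rw [this]; positivity
  have hVinv : V⁻¹ = W := Matrix.inv_eq_right_inv hVW
  refine ⟨hVunit, ?_⟩
  set F : Matrix (Fin 3) (Fin 3) ℝ := !![0, θ * β₁ * S, β₁ * S; 0,0,0; 0,0,0] with hF
  set c0 : ℝ := (θ * (1 - p) / b + p / c) * (σ * β₁ * S / a) with hc0def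
  have hFW : F * W = !![c0, θ * β₁ * S / b, β₁ * S / c; 0,0,0; 0,0,0] := by
    ext i j
    fin_cases i <;> fin_cases j <;>
      · simp [hF, hW, Matrix.mul_apply, Fin.sum_univ_three, Matrix.vecHead, Matrix.vecTail, hc0def]
        try field_simp
        try ring
  have hc0nn : 0 ≤ c0 := by
    have h1p : 0 < 1 - p := by linarith [hp.2]
    have h1 : 0 < θ * (1 - p) / b := div_pos (mul_pos hθ.1 h1p) hb0
    have h2 : 0 < p / c := div_pos hp.1 hc0
    have h3 : 0 < σ * β₁ * S / a := by positivity
    exact le_of_lt (mul_pos (add_pos h1 h2) h3)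
  rw [hVinv, hFW, sr_aux _ _ _ hc0nn]
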